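/- arXiv:0804.0744 — 3 statements merged into one kernel-verified Lean document; each statement's English description precedes it below -/
import Mathlib

section
/- Let n and m be integers with 0 < n < m and let t ∈ (0, π/2]. Then n·sin²(t/n) ≥ m·sin²(t/m), and equality holds if and only if n = 1, m = 2 and t = π/2. -/
open Real

lemma aux_tan (u : ℝ) (hu0 : 0 < u) (hu : u ≤ π/4) : sin u < 2*u*cos u := by
  have hpi := pi_pos
  have hsub : Set.Icc (0:ℝ) (π/4) ⊆ {x | cos x ≠ 0} := by
    intro x hx
    have : 0 < cos x := cos_pos_of_mem_Ioo ⟨by linarith [hx.1], by linarith [hx.2]⟩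
    exact ne_of_gt this
  have hmono : StrictMonoOn (fun x => 2*x - tan x) (Set.Icc 0 (π/4)) := by
    apply strictMonoOn_of_deriv_pos (convex_Icc _ _)
    · exact (continuous_const.mul continuous_id).continuousOn.sub
        (continuousOn_tan.mono hsub)
    · intro x hx
      rw [interior_Icc] at hx
      obtain ⟨hx1, hx2⟩ := hx
      have hcos : 0 < cos x := cos_pos_of_mem_Ioo ⟨by linarith [hx1], by linarith [hx2]⟩
      have hd : HasDerivAt (fun x => 2*x - tan x) (2 - 1/cos x^2) x := by
        have := ((hasDerivAt_id x).const_mul 2).fun_sub (hasDerivAt_tan hcos.ne')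
        simpa using this
      rw [hd.deriv]
      have hcx : Real.sqrt 2 / 2 < cos x := by
        have := Real.cos_pi_div_four
        calc Real.sqrt 2 / 2 = cos (π/4) := this.symm
          _ < cos x := by
            apply Real.strictAntiOn_cos ⟨by linarith [hx1], by linarith⟩
              ⟨by linarith, by linarith⟩ hx2
      have h2 : (Real.sqrt 2)^2 = 2 := Real.sq_sqrt (by norm_num)
      have : 1/2 < cos x ^2 := by nlinarith [Real.sqrt_nonneg 2]
      have : 1/cos x^2 < 2 := by
        rw [div_lt_iff₀ (by positivity)]; nlinarith
      linarith
  have h0 : (0:ℝ) ∈ Set.Icc (0:ℝ) (π/4) := ⟨le_refl _, by linarith⟩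
  have hu' : u ∈ Set.Icc (0:ℝ) (π/4) := ⟨hu0.le, hu⟩
  have := hmono h0 hu' hu0
  simp only [Real.tan_zero, mul_zero, sub_zero] at this
  have hcos : 0 < cos u := cos_pos_of_mem_Ioo ⟨by linarith, by linarith⟩
  have htan : tan u < 2*u := by linarith
  rw [tan_eq_sin_div_cos, div_lt_iff₀ hcos] at htan
  linarith

lemma aux_mono (u v : ℝ) (hu : 0 < u) (huv : u < v) (hv : v ≤ π/4) :
    sin u ^2 / u < sin v ^2 / v := by
  have hpi := pi_pos
  have hmono : StrictMonoOn (fun x => sin x ^2 / x) (Set.Ioc 0 (π/4)) := by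
    apply strictMonoOn_of_deriv_pos (convex_Ioc _ _)
    · apply ContinuousOn.div ((continuous_sin.pow 2).continuousOn) continuousOn_id
      intro x hx; exact ne_of_gt hx.1
    · intro x hx
      rw [interior_Ioc] at hx
      obtain ⟨hx1, hx2⟩ := hx
      have hx0 := hx1
      have hd : HasDerivAt (fun x => sin x ^2 / x)
          ((2 * sin x ^ 1 * cos x * x - sin x ^2 * 1) / x^2) x :=
        ((Real.hasDerivAt_sin x).pow 2).div (hasDerivAt_id x) hx0.ne'
      rw [hd.deriv]
      have hsin : 0 < sin x := sin_pos_of_pos_of_lt_pi hx0 (by linarith)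
      have htan := aux_tan x hx0 hx2.le
      apply div_pos _ (by positivity)
      nlinarith
  have := hmono ⟨hu, by linarith⟩ ⟨by linarith, hv⟩ huv
  simpa using this

lemma aux_real (a b t : ℝ) (ha : 2 ≤ a) (hab : a < b) (ht : 0 < t) (ht2 : t ≤ π/2) :
    b * sin (t/b)^2 < a * sin (t/a)^2 := by
  have ha0 : 0 < a := by linarith
  have hb0 : 0 < b := by linarith
  have h := aux_mono (t/b) (t/a) (by positivity)
    (by apply div_lt_div_of_pos_left ht ha0 hab)
    (by rw [div_le_iff₀ ha0]; nlinarith [pi_pos])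
  have e1 : sin (t/b)^2 / (t/b) = b * sin (t/b)^2 / t := by field_simp
  have e2 : sin (t/a)^2 / (t/a) = a * sin (t/a)^2 / t := by field_simp
  rw [e1, e2, div_lt_div_iff_of_pos_right ht] at h
  exact h


lemma aux_half (t : ℝ) (ht0 : 0 < t) (ht2 : t ≤ π/2) :
    sin t ^2 - 2 * sin (t/2)^2 = 2 * sin (t/2)^2 * cos t := by
  have h1 : sin t = 2 * sin (t/2) * cos (t/2) := by
    rw [show t = 2*(t/2) by ring, Real.sin_two_mul]; ring_nf
  have h2 : cos t = 2 * cos (t/2)^2 - 1 := by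
    rw [show t = 2*(t/2) by ring, Real.cos_two_mul]; ring_nf
  rw [h1, h2]; ring

lemma aux_eq12 (t : ℝ) (ht0 : 0 < t) (ht2 : t ≤ π/2) :
    2 * sin (t/2)^2 ≤ sin t ^2 ∧ (sin t ^2 = 2 * sin (t/2)^2 ↔ t = π/2) := by
  have hpi := pi_pos
  have hkey := aux_half t ht0 ht2
  have hsin : 0 < sin (t/2) := sin_pos_of_pos_of_lt_pi (by linarith) (by linarith)
  have hcos : 0 ≤ cos t := cos_nonneg_of_mem_Icc ⟨by linarith, ht2⟩
  constructor
  · nlinarith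
  · constructor
    · intro h
      have hc0 : cos t = 0 := by nlinarith [mul_pos hsin hsin]
      have hmem1 : t ∈ Set.Icc 0 π := ⟨by linarith, by linarith⟩
      have hmem2 : π/2 ∈ Set.Icc 0 π := ⟨by linarith, by linarith⟩
      have heq : cos t = cos (π/2) := by rw [hc0, Real.cos_pi_div_two]
      exact injOn_cos hmem1 hmem2 heq
    · intro h
      subst h
      rw [Real.cos_pi_div_two] at hkey
      linarith

/-- Let `n` and `m` be integers with `0 < n < m` and let `t ∈ (0, π/2]`. Then
`n·sin²(t/n) ≥ m·sin²(t/m)`, with equality if and only if `n = 1`, `m = 2` and `t = π/2`. -/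
theorem stmt0 (n m : ℤ) (hn : 0 < n) (hnm : n < m) (t : ℝ) (ht : t ∈ Set.Ioc 0 (π / 2)) :
    (m : ℝ) * sin (t / (m : ℝ)) ^ 2 ≤ (n : ℝ) * sin (t / (n : ℝ)) ^ 2 ∧
      ((n : ℝ) * sin (t / (n : ℝ)) ^ 2 = (m : ℝ) * sin (t / (m : ℝ)) ^ 2 ↔
        n = 1 ∧ m = 2 ∧ t = π / 2) := by
  obtain ⟨ht0, ht2⟩ := ht
  have hpi := pi_pos
  have hnm' : (n:ℝ) < m := by exact_mod_cast hnm
  by_cases h2 : 2 ≤ n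
  · have h2' : (2:ℝ) ≤ n := by exact_mod_cast h2
    have hs := aux_real (n:ℝ) (m:ℝ) t h2' hnm' ht0 ht2
    refine ⟨hs.le, ?_, ?_⟩
    · intro h; linarith
    · rintro ⟨h1, -, -⟩; omega
  · have hn1 : n = 1 := by omega
    subst hn1
    simp only [Int.cast_one, one_mul, div_one]
    by_cases hm2 : m = 2
    · subst hm2
      push_cast
      obtain ⟨hle, hiff⟩ := aux_eq12 t ht0 ht2
      exact ⟨hle, by rw [hiff]; simp⟩
    · have hm3 : 3 ≤ m := by omega
      have hm3' : (3:ℝ) ≤ m := by exact_mod_cast hm3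
      have hs1 := aux_real 2 (m:ℝ) t (le_refl 2) (by linarith) ht0 ht2
      have hs2 := (aux_eq12 t ht0 ht2).1
      refine ⟨by linarith, ?_, ?_⟩
      · intro h; linarith
      · rintro ⟨-, hm, -⟩; omega
end

section
/- Let m ≥ 2 be an integer, let θ be a real number with (m−1)π/2 ≤ θ < mπ/2, and let r be a real number with r ≥ tan(θ/m) (in particular r > 0). Then for all nonnegative real numbers x_1, …, x_m satisfying Σ_{i=1}^m arctan(r·x_i) = θ, one has Σ_{i=1}^m (1 − x_i²)/(1 + r²·x_i²) ≥ (m/r²)·((1 + r²)·cos²(θ/m) − 1). -/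
open Real

private lemma sin_sq_add_sin_sq (a b : ℝ) :
    sin a ^ 2 + sin b ^ 2 = 1 - cos (a + b) * cos (a - b) := by
  rw [cos_add, cos_sub]
  nlinarith [sin_sq_add_cos_sq a, sin_sq_add_cos_sq b]

private lemma pair_smooth (x y c : ℝ) (hx : 0 ≤ x) (hxc : x ≤ c) (hcy : c ≤ y)
    (hsum : x + y ≤ π / 2) :
    sin c ^ 2 + sin (x + y - c) ^ 2 ≤ sin x ^ 2 + sin y ^ 2 := by
  have h1 := sin_sq_add_sin_sq x y
  have h2 := sin_sq_add_sin_sq c (x + y - c)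
  have hsum' : c + (x + y - c) = x + y := by ring
  rw [hsum'] at h2
  have hcosnn : 0 ≤ cos (x + y) :=
    cos_nonneg_of_mem_Icc ⟨by linarith [pi_pos], hsum⟩
  have hmono : cos (x - y) ≤ cos (c - (x + y - c)) := by
    have e1 : cos (x - y) = cos |x - y| := (cos_abs _).symm
    have e2 : cos (c - (x + y - c)) = cos |c - (x + y - c)| := (cos_abs _).symm
    rw [e1, e2]
    apply cos_le_cos_of_nonneg_of_le_pi (abs_nonneg _)
    · have : |x - y| = y - x := by rw [abs_sub_comm, abs_of_nonneg]; linarith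
      rw [this]; linarith [pi_pos]
    · rw [abs_le]
      have : |x - y| = y - x := by rw [abs_sub_comm, abs_of_nonneg]; linarith
      rw [this]
      constructor <;> [linarith; linarith]
  nlinarith [mul_le_mul_of_nonneg_left hmono hcosnn]

private lemma key_sin_sq {ι : Type*} [DecidableEq ι] :
    ∀ (n : ℕ) (s : Finset ι) (w : ι → ℝ), s.card = n → (∀ i ∈ s, 0 ≤ w i) →
    (∑ i ∈ s, w i) ≤ π / 2 →
    (n : ℝ) * sin ((∑ i ∈ s, w i) / n) ^ 2 ≤ ∑ i ∈ s, sin (w i) ^ 2 := by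
  intro n
  induction n with
  | zero =>
    intro s w hcard _ _
    simp [Finset.card_eq_zero.mp hcard]
  | succ n ih =>
    intro s w hcard h0 hsum
    set W := ∑ i ∈ s, w i with hWdef
    have hW0 : 0 ≤ W := Finset.sum_nonneg h0
    set c : ℝ := W / (n + 1) with hcdef
    have hn1 : ((n : ℝ) + 1) ≠ 0 := by positivity
    have hWc : W = ((n : ℝ) + 1) * c := by rw [hcdef]; field_simp [hn1]
    have hc0 : 0 ≤ c := div_nonneg hW0 (by positivity)
    have hgoal_avg : W / ((n : ℕ) + 1 : ℕ) = c := by push_cast; rfl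
    by_cases hall : ∀ i ∈ s, w i = c
    · have hsumeq : ∑ i ∈ s, sin (w i) ^ 2 = ((n : ℝ) + 1) * sin c ^ 2 := by
        rw [Finset.sum_congr rfl fun i hi => by rw [hall i hi]]
        rw [Finset.sum_const, hcard]
        push_cast
        ring
      rw [hsumeq]
      push_cast
      rw [show W / ((n : ℝ) + 1) = c from rfl]
    · push_neg at hall
      obtain ⟨k, hk, hkne⟩ := hall
      have hex_j : ∃ j ∈ s, c < w j := by
        by_contra h
        push_neg at h
        have hlt : w k < c := lt_of_le_of_ne (h k hk) hkne
        have : W < ∑ _i ∈ s, c :=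
          Finset.sum_lt_sum (fun i hi => h i hi) ⟨k, hk, hlt⟩
        rw [Finset.sum_const, hcard, nsmul_eq_mul] at this
        push_cast at this
        nlinarith [hWc]
      have hex_i : ∃ i ∈ s, w i < c := by
        by_contra h
        push_neg at h
        have hlt : c < w k := lt_of_le_of_ne (h k hk) (Ne.symm hkne)
        have : (∑ _i ∈ s, c) < W :=
          Finset.sum_lt_sum (fun i hi => h i hi) ⟨k, hk, hlt⟩
        rw [Finset.sum_const, hcard, nsmul_eq_mul] at this
        push_cast at this
        nlinarith [hWc]
      obtain ⟨j, hj, hcj⟩ := hex_j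
      obtain ⟨i, hi, hic⟩ := hex_i
      have hij : i ≠ j := by rintro rfl; linarith
      have hij' : i ∈ s.erase j := Finset.mem_erase.mpr ⟨hij, hi⟩
      -- sums decomposition
      have hdecompw : w j + (w i + ∑ x ∈ (s.erase j).erase i, w x) = W := by
        rw [Finset.add_sum_erase _ w hij', Finset.add_sum_erase _ w hj]
      have hdecomps : sin (w j) ^ 2 + (sin (w i) ^ 2
            + ∑ x ∈ (s.erase j).erase i, sin (w x) ^ 2) = ∑ x ∈ s, sin (w x) ^ 2 := by
        rw [Finset.add_sum_erase _ (fun x => sin (w x) ^ 2) hij',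
          Finset.add_sum_erase _ (fun x => sin (w x) ^ 2) hj]
      have hrest0 : 0 ≤ ∑ x ∈ (s.erase j).erase i, w x :=
        Finset.sum_nonneg fun x hx =>
          h0 x (Finset.mem_of_mem_erase (Finset.mem_of_mem_erase hx))
      have hwiwj : w i + w j ≤ π / 2 := by
        have : w i + w j ≤ W := by linarith [hdecompw]
        linarith
      have hpair : sin c ^ 2 + sin (w i + w j - c) ^ 2 ≤ sin (w i) ^ 2 + sin (w j) ^ 2 :=
        pair_smooth (w i) (w j) c (h0 i hi) (le_of_lt hic) (le_of_lt hcj) hwiwj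
      -- apply IH to s.erase j with updated function
      set w' : ι → ℝ := Function.update w i (w i + w j - c) with hw'def
      have hcard' : (s.erase j).card = n := by
        rw [Finset.card_erase_of_mem hj, hcard]; rfl
      have hn1' : 1 ≤ n := by
        have : 0 < (s.erase j).card := Finset.card_pos.mpr ⟨i, hij'⟩
        omega
      have hw'i : w' i = w i + w j - c := Function.update_self _ _ _
      have hw'sum : ∑ x ∈ s.erase j, w' x = W - c := by
        rw [← Finset.add_sum_erase _ w' hij', hw'i]
        have : ∑ x ∈ (s.erase j).erase i, w' x = ∑ x ∈ (s.erase j).erase i, w x :=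
          Finset.sum_congr rfl fun x hx =>
            Function.update_of_ne (Finset.ne_of_mem_erase hx) _ _
        rw [this]
        linarith [hdecompw]
      have hw'0 : ∀ x ∈ s.erase j, 0 ≤ w' x := by
        intro x hx
        by_cases hxi : x = i
        · rw [hxi, hw'i]; linarith [h0 i hi]
        · rw [hw'def, Function.update_of_ne hxi]
          exact h0 x (Finset.mem_of_mem_erase hx)
      have hw'sumle : ∑ x ∈ s.erase j, w' x ≤ π / 2 := by rw [hw'sum]; linarith
      have hIH := ih (s.erase j) w' hcard' hw'0 hw'sumle
      rw [hw'sum] at hIH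
      have havg : (W - c) / (n : ℝ) = c := by
        have hnne : (n : ℝ) ≠ 0 := by positivity
        field_simp
        nlinarith [hWc]
      rw [havg] at hIH
      have hIHsum : ∑ x ∈ s.erase j, sin (w' x) ^ 2
          = sin (w i + w j - c) ^ 2 + ∑ x ∈ (s.erase j).erase i, sin (w x) ^ 2 := by
        rw [← Finset.add_sum_erase _ (fun x => sin (w' x) ^ 2) hij', hw'i]
        congr 1
        exact Finset.sum_congr rfl fun x hx => by
          rw [hw'def, Function.update_of_ne (Finset.ne_of_mem_erase hx)]
      rw [hIHsum] at hIH
      rw [hgoal_avg]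
      push_cast
      nlinarith [hpair, hIH, hdecomps]

/-- Let `m ≥ 2`, let `(m−1)π/2 ≤ θ < mπ/2`, and let `r ≥ tan(θ/m)`. Then for all
`x_1, …, x_m ≥ 0` with `Σ arctan(r·x_i) = θ`, one has
`Σ (1 − x_i²)/(1 + r²x_i²) ≥ (m/r²)·((1 + r²)·cos²(θ/m) − 1)`. -/
theorem stmt9 (m : ℕ) (hm : 2 ≤ m) (θ : ℝ)
    (hθ1 : ((m : ℝ) - 1) * π / 2 ≤ θ) (hθ2 : θ < (m : ℝ) * π / 2)
    (r : ℝ) (hr : tan (θ / m) ≤ r) :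
    ∀ x : Fin m → ℝ, (∀ i, 0 ≤ x i) → ∑ i, arctan (r * x i) = θ →
      ((m : ℝ) / r ^ 2) * ((1 + r ^ 2) * cos (θ / m) ^ 2 - 1) ≤
        ∑ i, (1 - x i ^ 2) / (1 + r ^ 2 * x i ^ 2) := by
  intro x hx hsumθ
  have hm2 : (2 : ℝ) ≤ (m : ℝ) := by exact_mod_cast hm
  have hmpos : (0 : ℝ) < m := by linarith
  have hpi := pi_pos
  have hθm_lt : θ / m < π / 2 := by
    rw [div_lt_iff₀ hmpos]; linarith
  have hθm_ge : π / 4 ≤ θ / m := by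
    rw [le_div_iff₀ hmpos]
    nlinarith [mul_nonneg (sub_nonneg.mpr hm2) hpi.le]
  have htan1 : (1 : ℝ) ≤ tan (θ / m) := by
    have h14 : π / 4 ∈ Set.Ioo (-(π / 2)) (π / 2) := ⟨by linarith, by linarith⟩
    have h2 : θ / m ∈ Set.Ioo (-(π / 2)) (π / 2) := ⟨by linarith, hθm_lt⟩
    calc (1 : ℝ) = tan (π / 4) := tan_pi_div_four.symm
      _ ≤ tan (θ / m) := strictMonoOn_tan.monotoneOn h14 h2 hθm_ge
  have hrpos : (0 : ℝ) < r := by linarith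
  have hr2 : (0 : ℝ) < r ^ 2 := by positivity
  -- the substitution s i = π/2 - arctan (r * x i)
  set s : Fin m → ℝ := fun i => π / 2 - arctan (r * x i) with hsdef
  have hs0 : ∀ i ∈ (Finset.univ : Finset (Fin m)), 0 ≤ s i := fun i _ => by
    have := arctan_lt_pi_div_two (r * x i)
    simp only [hsdef]; linarith
  have hssum : ∑ i, s i = (m : ℝ) * (π / 2) - θ := by
    simp only [hsdef]
    rw [Finset.sum_sub_distrib, hsumθ, Finset.sum_const, Finset.card_univ,
      Fintype.card_fin, nsmul_eq_mul]
  have hsle : ∑ i, s i ≤ π / 2 := by rw [hssum]; nlinarith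
  have hcard : (Finset.univ : Finset (Fin m)).card = m := by simp
  have hkey := key_sin_sq m Finset.univ s hcard hs0 hsle
  rw [hssum] at hkey
  have havg : ((m : ℝ) * (π / 2) - θ) / m = π / 2 - θ / m := by
    field_simp
  rw [havg, sin_pi_div_two_sub] at hkey
  have hterm : ∀ i, sin (s i) ^ 2 = 1 / (1 + (r * x i) ^ 2) := by
    intro i
    simp only [hsdef]
    rw [sin_pi_div_two_sub, cos_sq_arctan]
  rw [Finset.sum_congr rfl fun i _ => hterm i] at hkey
  -- rewrite the goal sum
  have hgsum : ∑ i, (1 - x i ^ 2) / (1 + r ^ 2 * x i ^ 2)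
      = ((1 + r ^ 2) * ∑ i, 1 / (1 + (r * x i) ^ 2) - m) / r ^ 2 := by
    have h1 : ∀ i ∈ (Finset.univ : Finset (Fin m)), (1 - x i ^ 2) / (1 + r ^ 2 * x i ^ 2)
        = ((1 + r ^ 2) * (1 / (1 + (r * x i) ^ 2)) - 1) / r ^ 2 := by
      intro i _
      have hden : (0 : ℝ) < 1 + (r * x i) ^ 2 := by positivity
      have hden' : (0 : ℝ) < 1 + r ^ 2 * x i ^ 2 := by nlinarith [sq_nonneg (r * x i)]
      field_simp
      ring
    rw [Finset.sum_congr rfl h1, ← Finset.sum_div]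
    congr 1
    rw [Finset.sum_sub_distrib, Finset.mul_sum, Finset.sum_const, Finset.card_univ,
      Fintype.card_fin, nsmul_eq_mul, mul_one]
  rw [hgsum]
  have hlhs : (m : ℝ) / r ^ 2 * ((1 + r ^ 2) * cos (θ / m) ^ 2 - 1)
      = ((1 + r ^ 2) * ((m : ℝ) * cos (θ / m) ^ 2) - m) / r ^ 2 := by
    field_simp
  rw [hlhs]
  apply (div_le_div_iff_of_pos_right hr2).mpr
  have h1r2 : (0 : ℝ) ≤ 1 + r ^ 2 := by positivity
  nlinarith [mul_le_mul_of_nonneg_left hkey h1r2]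
end

section
/- (Geometric maximum principle, matrix form) Let A and A' be n×n real symmetric positive definite matrices with A ≤ A', i.e. A' − A is positive semidefinite. Let θ ∈ (0, nπ/2) and let r, r' > 0 be real numbers satisfying Σ_{i=1}^n arctan(r·λ_i(A)) = θ and Σ_{i=1}^n arctan(r'·λ_i(A')) = θ. Then r ≥ r'. -/
open Real

section Aux
open Matrix

variable {n : ℕ}

private lemma quad_form_eq {A : Matrix (Fin n) (Fin n) ℝ} (hA : A.IsHermitian)
    (x : EuclideanSpace ℝ (Fin n)) :
    dotProduct (⇑x) (A *ᵥ ⇑x) =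
      ∑ i, hA.eigenvalues i * (inner ℝ (hA.eigenvectorBasis i) x : ℝ) ^ 2 := by
  set v := hA.eigenvectorBasis with hv
  set y : EuclideanSpace ℝ (Fin n) := (WithLp.equiv 2 _).symm (A *ᵥ ⇑x) with hy
  have hyc : ⇑y = A *ᵥ ⇑x := rfl
  have hAT : Aᵀ = A := by simpa [Matrix.conjTranspose_eq_transpose_of_trivial] using hA.eq
  have h1 : dotProduct (⇑x) (A *ᵥ ⇑x) = (inner ℝ x y : ℝ) := by
    rw [EuclideanSpace.inner_eq_star_dotProduct]
    simp [hyc, dotProduct_comm]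
  have h2 : ∀ i, (inner ℝ (v i) y : ℝ) = hA.eigenvalues i * (inner ℝ (v i) x : ℝ) := by
    intro i
    have hvm : ⇑(v i) ᵥ* A = hA.eigenvalues i • ⇑(v i) := by
      calc ⇑(v i) ᵥ* A = Aᵀ *ᵥ ⇑(v i) := (mulVec_transpose A _).symm
        _ = A *ᵥ ⇑(v i) := by rw [hAT]
        _ = hA.eigenvalues i • ⇑(v i) := hA.mulVec_eigenvectorBasis i
    rw [EuclideanSpace.inner_eq_star_dotProduct]
    simp only [hyc, star_trivial]
    rw [dotProduct_comm, dotProduct_mulVec, hvm, smul_dotProduct, smul_eq_mul]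
    rw [EuclideanSpace.inner_eq_star_dotProduct]
    simp [dotProduct_comm]
  rw [h1, ← v.sum_inner_mul_inner x y]
  congr 1; funext i
  rw [h2 i, real_inner_comm x (v i)]
  ring

private lemma coeff_zero {A : Matrix (Fin n) (Fin n) ℝ} (hA : A.IsHermitian)
    {s : Set (Fin n)} {x : EuclideanSpace ℝ (Fin n)}
    (hx : x ∈ Submodule.span ℝ ((fun i => hA.eigenvectorBasis i) '' s))
    {i : Fin n} (hi : i ∉ s) : (inner ℝ (hA.eigenvectorBasis i) x : ℝ) = 0 := by
  set v := hA.eigenvectorBasis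
  have hx' : x ∈ Submodule.span ℝ (⇑v.toBasis '' s) := by rwa [v.coe_toBasis]
  have hsupp := v.toBasis.mem_span_image.mp hx'
  have : v.toBasis.repr x i = 0 := by
    by_contra h
    exact hi (hsupp (Finsupp.mem_support_iff.mpr h))
  rwa [v.coe_toBasis_repr_apply, v.repr_apply_apply] at this

private lemma span_finrank (v : OrthonormalBasis (Fin n) ℝ (EuclideanSpace ℝ (Fin n)))
    (s : Finset (Fin n)) :
    Module.finrank ℝ (Submodule.span ℝ ((fun i => v i) '' (s : Set (Fin n)))) = s.card := by
  rw [Set.image_eq_range]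
  rw [show (fun x : (s : Set (Fin n)) => v ↑x) = (fun i => v i) ∘ Subtype.val from rfl]
  rw [finrank_span_eq_card ((v.orthonormal.linearIndependent).comp _ Subtype.val_injective)]
  exact Fintype.card_coe s

private lemma weyl {A A' : Matrix (Fin n) (Fin n) ℝ} (hA : A.IsHermitian) (hA' : A'.IsHermitian)
    (hle : (A' - A).PosSemidef) (k : Fin n) :
    hA.eigenvalues (Tuple.sort hA.eigenvalues k) ≤ hA'.eigenvalues (Tuple.sort hA'.eigenvalues k) := by
  classical
  set μ := hA.eigenvalues with hμ
  set μ' := hA'.eigenvalues with hμ'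
  set v := hA.eigenvectorBasis with hv
  set v' := hA'.eigenvectorBasis with hv'
  set σ := Tuple.sort μ with hσ
  set σ' := Tuple.sort μ' with hσ'
  set sW : Finset (Fin n) := (Finset.Ici k).image σ with hsW
  set sV : Finset (Fin n) := (Finset.Iic k).image σ' with hsV
  set W := Submodule.span ℝ ((fun i => v i) '' (sW : Set (Fin n))) with hW
  set V := Submodule.span ℝ ((fun i => v' i) '' (sV : Set (Fin n))) with hV
  have hWrank : Module.finrank ℝ W = n - k := by
    rw [hW, span_finrank, hsW, Finset.card_image_of_injective _ σ.injective, Fin.card_Ici]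
  have hVrank : Module.finrank ℝ V = k + 1 := by
    rw [hV, span_finrank, hsV, Finset.card_image_of_injective _ σ'.injective, Fin.card_Iic]
  have hpos : 0 < Module.finrank ℝ ↥(V ⊓ W) := by
    have h1 := Submodule.finrank_sup_add_finrank_inf_eq V W
    have h2 : Module.finrank ℝ ↥(V ⊔ W) ≤ n := by
      simpa [finrank_euclideanSpace_fin] using Submodule.finrank_le (V ⊔ W)
    have hk : (k : ℕ) < n := k.isLt
    omega
  obtain ⟨x, hx0⟩ := Module.finrank_pos_iff_exists_ne_zero.mp hpos
  have hxV : (x : EuclideanSpace ℝ (Fin n)) ∈ V := x.2.1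
  have hxW : (x : EuclideanSpace ℝ (Fin n)) ∈ W := x.2.2
  set x₀ : EuclideanSpace ℝ (Fin n) := (x : EuclideanSpace ℝ (Fin n)) with hx₀
  have hx₀ne : x₀ ≠ 0 := fun h => hx0 (Subtype.ext h)
  set N : ℝ := inner ℝ x₀ x₀ with hN
  have hNpos : 0 < N := by
    rw [hN, real_inner_self_eq_norm_sq]
    exact pow_pos (norm_pos_iff.mpr hx₀ne) 2
  have hparA : ∀ (w : OrthonormalBasis (Fin n) ℝ (EuclideanSpace ℝ (Fin n))),
      ∑ i, (inner ℝ (w i) x₀ : ℝ) ^ 2 = N := by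
    intro w
    rw [hN, ← w.sum_inner_mul_inner x₀ x₀]
    congr 1; funext i
    rw [real_inner_comm x₀ (w i)]; ring
  have hlow : μ (σ k) * N ≤ ∑ i, μ i * (inner ℝ (v i) x₀ : ℝ) ^ 2 := by
    rw [← hparA v, Finset.mul_sum]
    apply Finset.sum_le_sum
    intro i _
    by_cases hc : (inner ℝ (v i) x₀ : ℝ) = 0
    · simp [hc]
    · have hi : i ∈ sW := by
        by_contra hi
        exact hc (coeff_zero hA hxW (by simpa using hi))
      obtain ⟨j, hj, rfl⟩ := Finset.mem_image.mp hi
      exact mul_le_mul_of_nonneg_right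
        (Tuple.monotone_sort μ (Finset.mem_Ici.mp hj)) (sq_nonneg _)
  have hhigh : ∑ i, μ' i * (inner ℝ (v' i) x₀ : ℝ) ^ 2 ≤ μ' (σ' k) * N := by
    rw [← hparA v', Finset.mul_sum]
    apply Finset.sum_le_sum
    intro i _
    by_cases hc : (inner ℝ (v' i) x₀ : ℝ) = 0
    · simp [hc]
    · have hi : i ∈ sV := by
        by_contra hi
        exact hc (coeff_zero hA' hxV (by simpa using hi))
      obtain ⟨j, hj, rfl⟩ := Finset.mem_image.mp hi
      exact mul_le_mul_of_nonneg_right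
        (Tuple.monotone_sort μ' (Finset.mem_Iic.mp hj)) (sq_nonneg _)
  have hmid : dotProduct (⇑x₀) (A *ᵥ ⇑x₀) ≤ dotProduct (⇑x₀) (A' *ᵥ ⇑x₀) := by
    have := hle.dotProduct_mulVec_nonneg (⇑x₀)
    rw [star_trivial, sub_mulVec, dotProduct_sub] at this
    linarith
  rw [quad_form_eq hA x₀, quad_form_eq hA' x₀] at hmid
  have : μ (σ k) * N ≤ μ' (σ' k) * N := le_trans hlow (le_trans hmid hhigh)
  exact (mul_le_mul_iff_of_pos_right hNpos).mp this

end Aux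

/-- Geometric maximum principle, matrix form: let `A ≤ A'` be `n×n` real symmetric
positive definite matrices, let `θ ∈ (0, nπ/2)`, and let `r, r' > 0` satisfy
`Σ arctan(r·λ_i(A)) = θ` and `Σ arctan(r'·λ_i(A')) = θ`. Then `r ≥ r'`. -/
theorem stmt11 (n : ℕ) (A A' : Matrix (Fin n) (Fin n) ℝ)
    (hA : A.PosDef) (hA' : A'.PosDef) (hle : (A' - A).PosSemidef)
    (θ : ℝ) (hθ : θ ∈ Set.Ioo 0 ((n : ℝ) * π / 2))
    (r r' : ℝ) (hr0 : 0 < r) (hr'0 : 0 < r')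
    (hr : ∑ i, arctan (r * hA.1.eigenvalues i) = θ)
    (hr' : ∑ i, arctan (r' * hA'.1.eigenvalues i) = θ) :
    r' ≤ r := by
  have hn : n ≠ 0 := by
    rintro rfl
    obtain ⟨h1, h2⟩ := hθ
    norm_num at h2
    linarith
  have hμ'pos : ∀ i, 0 < hA'.1.eigenvalues i := fun i => hA'.eigenvalues_pos i
  by_contra hcon
  push_neg at hcon
  have hsum : ∑ i, arctan (r * hA.1.eigenvalues i)
      ≤ ∑ i, arctan (r * hA'.1.eigenvalues i) := by
    rw [← Equiv.sum_comp (Tuple.sort hA.1.eigenvalues)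
      (fun i => arctan (r * hA.1.eigenvalues i)),
      ← Equiv.sum_comp (Tuple.sort hA'.1.eigenvalues)
      (fun i => arctan (r * hA'.1.eigenvalues i))]
    apply Finset.sum_le_sum
    intro k _
    exact arctan_strictMono.monotone
      (mul_le_mul_of_nonneg_left (weyl hA.1 hA'.1 hle k) hr0.le)
  have hstrict : ∑ i, arctan (r * hA'.1.eigenvalues i)
      < ∑ i, arctan (r' * hA'.1.eigenvalues i) := by
    apply Finset.sum_lt_sum_of_nonempty
    · have : Nonempty (Fin n) := Fin.pos_iff_nonempty.mp (Nat.pos_of_ne_zero hn)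
      exact Finset.univ_nonempty
    · intro i _
      exact arctan_strictMono (mul_lt_mul_of_pos_right hcon (hμ'pos i))
  linarith [hr, hr', hsum, hstrict]
end
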